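/- Let B be a graded commutative ring (over a field of characteristic 0), z an even variable of degree j ∈ 2ℤ and z* a variable of degree -j-1, and A = B[z,z*] = B[z] ⊕ B[z]z* with a P₀-bracket such that [z,z*] = 1 and [z,B] = 0 = [z*,B]. Then every degree-zero Poisson derivation D of A (a derivation of degree 0 for the product satisfying D[a,b] = [Da,b] + [a,Db]) agrees, on the generators z and z*, with a hamiltonian derivation [h,·] where h = G - z* f₀ ∈ A^{-1}, with D(z) = f₀ ∈ B[z], D(z*) = g₀ + z* g₁, g₁ = -[f₀, z*], and G = ∫ g₀ dz (formal antiderivative in z). Moreover D - [h,·] preserves B. -/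

import Mathlib

/-- A `P₀`-algebra over a field `k`: a ℤ-graded (graded-commutative) algebra with a
Poisson bracket of degree `1` satisfying graded antisymmetry, Leibniz rule and
graded Jacobi identity. -/
structure P0Data (k A : Type*) [Field k] [Ring A] [Algebra k A] where
  grade : ℤ → Submodule k A
  internal : DirectSum.IsInternal grade
  one_mem : (1 : A) ∈ grade 0
  mul_mem : ∀ {r s : ℤ} {a b : A}, a ∈ grade r → b ∈ grade s → a * b ∈ grade (r + s)
  gcomm : ∀ {r s : ℤ} {a b : A}, a ∈ grade r → b ∈ grade s →
    a * b = ((-1 : k) ^ (r * s)) • (b * a)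
  bracket : A →ₗ[k] A →ₗ[k] A
  bracket_mem : ∀ {r s : ℤ} {a b : A}, a ∈ grade r → b ∈ grade s →
    bracket a b ∈ grade (r + s + 1)
  antisymm : ∀ {r s : ℤ} {a b : A}, a ∈ grade r → b ∈ grade s →
    bracket a b = -(((-1 : k) ^ ((r - 1) * (s - 1))) • bracket b a)
  leibniz : ∀ {r s : ℤ} {a b : A} (c : A), a ∈ grade r → b ∈ grade s →
    bracket (a * b) c = a * bracket b c + ((-1 : k) ^ (r * s)) • (b * bracket a c)
  jacobi : ∀ {r s t : ℤ} {a b c : A}, a ∈ grade r → b ∈ grade s → c ∈ grade t →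
    ((-1 : k) ^ ((r - 1) * (t - 1))) • bracket (bracket a b) c +
      ((-1 : k) ^ ((s - 1) * (r - 1))) • bracket (bracket b c) a +
      ((-1 : k) ^ ((t - 1) * (s - 1))) • bracket (bracket c a) b = 0

namespace PDOD

open scoped Classical DirectSum

variable {k A : Type*} [Field k] [CharZero k] [Ring A] [Algebra k A] (P : P0Data k A)

noncomputable def dec : A ≃ₗ[k] ⨁ i, P.grade i :=
  (LinearEquiv.ofBijective (DirectSum.coeLinearMap P.grade) P.internal).symm

noncomputable def comp (i : ℤ) (x : A) : A := (dec P x i : A)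

lemma comp_mem (i : ℤ) (x : A) : comp P i x ∈ P.grade i := (dec P x i).2

lemma comp_eq_zero_of_not_mem {i : ℤ} {x : A} (h : i ∉ (dec P x).support) :
    comp P i x = 0 := by
  have h' := DFinsupp.notMem_support_iff.mp h
  simp [comp, h']

lemma sum_comp (x : A) : ∑ i ∈ (dec P x).support, comp P i x = x := by
  have h1 : (∑ i ∈ (dec P x).support,
      DirectSum.of (fun i => P.grade i) i (dec P x i)) = dec P x :=
    DirectSum.sum_support_of _
  have h2 := congrArg (DirectSum.coeLinearMap P.grade) h1
  rw [map_sum] at h2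
  simp only [DirectSum.coeLinearMap_of] at h2
  have h3 : DirectSum.coeLinearMap P.grade (dec P x) = x := by
    have := (LinearEquiv.ofBijective (DirectSum.coeLinearMap P.grade)
      P.internal).apply_symm_apply x
    exact this
  rw [h3] at h2
  exact h2

lemma sum_homog_eq_zero {s : Finset ℤ} {σ : ℤ → ℤ} (hσ : Set.InjOn σ s) {u : ℤ → A}
    (hu : ∀ i ∈ s, u i ∈ P.grade (σ i)) (hsum : ∑ i ∈ s, u i = 0) :
    ∀ i ∈ s, u i = 0 := by
  intro i₀ hi₀
  set Y : ⨁ i, P.grade i :=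
    ∑ i ∈ s.attach, DirectSum.of (fun i => P.grade i) (σ i) ⟨u i, hu i i.2⟩ with hY
  have hco : DirectSum.coeLinearMap P.grade Y = 0 := by
    rw [hY, map_sum]
    simp only [DirectSum.coeLinearMap_of]
    rw [Finset.sum_attach s (fun i => u i)]
    exact hsum
  have hY0 : Y = 0 := by
    have hinj := (LinearEquiv.ofBijective (DirectSum.coeLinearMap P.grade)
      P.internal).injective
    apply hinj
    change DirectSum.coeLinearMap P.grade Y = DirectSum.coeLinearMap P.grade 0; rw [hco, map_zero]
  have h0 : Y (σ i₀) = 0 := by rw [hY0]; rfl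
  rw [hY, DFinsupp.finset_sum_apply] at h0
  have key := (Finset.sum_eq_single_of_mem (s := s.attach)
      (f := fun a => ((DirectSum.of (fun i => (P.grade i : Type _)) (σ a)) ⟨u a, hu a a.2⟩) (σ i₀))
      ⟨i₀, hi₀⟩ (Finset.mem_attach _ _)
      (fun b _ hb => DirectSum.of_eq_of_ne _ _ _
        (fun hc => hb (Subtype.ext (hσ b.2 hi₀ hc.symm))))).symm.trans h0
  rw [DirectSum.of_eq_same] at key
  exact congrArg Subtype.val key

lemma comp_map_eq_zero (L : A →ₗ[k] A) (c : ℤ)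
    (hL : ∀ i : ℤ, ∀ v ∈ P.grade i, L v ∈ P.grade (i + c)) {x : A} (hx : L x = 0) :
    ∀ i : ℤ, L (comp P i x) = 0 := by
  intro i
  by_cases hi : i ∈ (dec P x).support
  · refine sum_homog_eq_zero P (s := (dec P x).support) (σ := fun i => i + c)
      (fun a _ b _ h => by simpa using h) (fun i _ => hL i _ (comp_mem P i x)) ?_ i hi
    rw [← map_sum, sum_comp, hx]
  · rw [comp_eq_zero_of_not_mem P hi, map_zero]

lemma bracket_sum_left (y : A) (s : Finset ℤ) (f : ℤ → A) :
    P.bracket (∑ i ∈ s, f i) y = ∑ i ∈ s, P.bracket (f i) y := by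
  simpa using map_sum (P.bracket.flip y) f s

lemma brL_grade {t : ℤ} {y : A} (hy : y ∈ P.grade t) :
    ∀ i : ℤ, ∀ v ∈ P.grade i, P.bracket y v ∈ P.grade (i + (t + 1)) := by
  intro i v hv
  have h := P.bracket_mem hy hv
  rwa [show t + i + 1 = i + (t + 1) by ring] at h

lemma brR_grade {t : ℤ} {y : A} (hy : y ∈ P.grade t) :
    ∀ i : ℤ, ∀ v ∈ P.grade i, P.bracket.flip y v ∈ P.grade (i + (t + 1)) := by
  intro i v hv
  have h := P.bracket_mem hv hy
  rwa [show i + t + 1 = i + (t + 1) by ring] at h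

lemma bracket_one (c : A) : P.bracket 1 c = 0 := by
  have h := P.leibniz c P.one_mem P.one_mem
  rw [one_mul, one_mul] at h
  norm_num at h
  exact h

lemma bracket_flip_zero {t : ℤ} {y : A} (hy : y ∈ P.grade t) {x : A}
    (h : P.bracket y x = 0) : P.bracket x y = 0 := by
  have hc : ∀ i, P.bracket y (comp P i x) = 0 :=
    comp_map_eq_zero P (P.bracket y) (t + 1) (brL_grade P hy) h
  have hs : P.bracket x y = ∑ i ∈ (dec P x).support, P.bracket (comp P i x) y := by
    conv_lhs => rw [← sum_comp P x]
    exact bracket_sum_left P y _ _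
  rw [hs]
  refine Finset.sum_eq_zero fun i _ => ?_
  rw [P.antisymm (comp_mem P i x) hy, hc i, smul_zero, neg_zero]

lemma bracket_flip_zero' {t : ℤ} {y : A} (hy : y ∈ P.grade t) {x : A}
    (h : P.bracket x y = 0) : P.bracket y x = 0 := by
  have hc : ∀ i, P.bracket (comp P i x) y = 0 := by
    intro i
    have := comp_map_eq_zero P (P.bracket.flip y) (t + 1) (brR_grade P hy)
      (by simpa using h) i
    simpa using this
  have hs : P.bracket y x = ∑ i ∈ (dec P x).support, P.bracket y (comp P i x) := by
    conv_lhs => rw [← sum_comp P x]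
    exact map_sum _ _ _
  rw [hs]
  refine Finset.sum_eq_zero fun i _ => ?_
  rw [P.antisymm hy (comp_mem P i x), hc i, smul_zero, neg_zero]

lemma bracket_mul_zero {t : ℤ} {c : A} (hc : c ∈ P.grade t) {a b : A}
    (ha : P.bracket a c = 0) (hb : P.bracket b c = 0) : P.bracket (a * b) c = 0 := by
  have hA := comp_map_eq_zero P (P.bracket.flip c) (t + 1) (brR_grade P hc)
    (by simpa using ha)
  have hB := comp_map_eq_zero P (P.bracket.flip c) (t + 1) (brR_grade P hc)
    (by simpa using hb)
  simp only [LinearMap.flip_apply] at hA hB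
  conv_lhs => rw [← sum_comp P a, ← sum_comp P b, Finset.sum_mul_sum]
  rw [bracket_sum_left]
  refine Finset.sum_eq_zero fun i _ => ?_
  rw [bracket_sum_left]
  refine Finset.sum_eq_zero fun i' _ => ?_
  rw [P.leibniz c (comp_mem P i a) (comp_mem P i' b), hA i, hB i',
    mul_zero, mul_zero, smul_zero, add_zero]

/-- the commutant of a homogeneous element is a subalgebra -/
def commutant {t : ℤ} {c : A} (hc : c ∈ P.grade t) : Subalgebra k A where
  carrier := {x | P.bracket x c = 0}
  mul_mem' := fun ha hb => bracket_mul_zero P hc ha hb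
  one_mem' := bracket_one P c
  add_mem' := fun {x y} hx hy => by
    have : P.bracket (x + y) c = P.bracket x c + P.bracket y c := by
      rw [map_add]; rfl
    simp only [Set.mem_setOf_eq] at *
    rw [this, hx, hy, add_zero]
  zero_mem' := by
    show P.bracket 0 c = 0
    rw [map_zero]; rfl
  algebraMap_mem' := fun r => by
    show P.bracket (algebraMap k A r) c = 0
    rw [Algebra.algebraMap_eq_smul_one, map_smul, LinearMap.smul_apply,
      bracket_one, smul_zero]

@[simp] lemma mem_commutant {t : ℤ} {c : A} (hc : c ∈ P.grade t) (x : A) :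
    x ∈ commutant P hc ↔ P.bracket x c = 0 := Iff.rfl

end PDOD
/-- Let `A = B[z, z*]` with `z` even of degree `j`, `z*` of degree
`-j-1`, a `P₀`-bracket with `[z,z*] = 1`, `[z,B] = 0 = [z*,B]`, and
`A = B[z] ⊕ B[z]·z*`.  Then every degree-zero Poisson derivation `D` of `A` agrees on the
generators `z, z*` with the hamiltonian derivation `[h, ·]`, `h = G - z*·f₀` where
`D z = f₀ ∈ B[z]`, `D z* = g₀ + z*·g₁` with `g₀, g₁ ∈ B[z]` and `G = ∫ g₀ dz` (i.e.
`[G, z*] = g₀`); moreover `D - [h, ·]` preserves `B`. -/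
theorem poisson_derivation_one_dimensional {k A : Type*} [Field k] [CharZero k]
    [Ring A] [Algebra k A] (P : P0Data k A)
    (j : ℤ) (hj : Even j) (z zs : A)
    (hz : z ∈ P.grade j) (hzs : zs ∈ P.grade (-j - 1))
    (B : Subalgebra k A) :
    let Bz : Subalgebra k A := Algebra.adjoin k (insert z (B : Set A))
    ∀ (_ : P.bracket z zs = 1)
      (_ : P.bracket z z = 0) (_ : P.bracket zs zs = 0)
      (_ : ∀ b ∈ B, P.bracket z b = 0) (_ : ∀ b ∈ B, P.bracket zs b = 0)
      -- A = B[z] ⊕ B[z]·z*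
      (_ : ∀ a : A, ∃ p ∈ Bz, ∃ q ∈ Bz, a = p + q * zs)
      (_ : ∀ p ∈ Bz, ∀ q ∈ Bz, p + q * zs = 0 → p = 0 ∧ q = 0)
      -- formal antiderivative in z exists in B[z]
      (_ : ∀ g ∈ Bz, ∃ G ∈ Bz, P.bracket G zs = g)
      -- B is the subalgebra of elements Poisson-commuting with z and z*
      (_ : ∀ x : A, P.bracket x z = 0 → P.bracket x zs = 0 → x ∈ B)
      -- D is a Poisson derivation of degree zero
      (D : A →ₗ[k] A)
      (_ : ∀ a b : A, D (a * b) = D a * b + a * D b)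
      (_ : ∀ a b : A, D (P.bracket a b) = P.bracket (D a) b + P.bracket a (D b))
      (_ : ∀ (i : ℤ), ∀ x ∈ P.grade i, D x ∈ P.grade i),
      ∃ f₀ g₀ g₁ G : A, f₀ ∈ Bz ∧ g₀ ∈ Bz ∧ g₁ ∈ Bz ∧ G ∈ Bz ∧
        D z = f₀ ∧ D zs = g₀ + zs * g₁ ∧ P.bracket G zs = g₀ ∧
        D z = P.bracket (G - zs * f₀) z ∧
        D zs = P.bracket (G - zs * f₀) zs ∧
        ∀ b ∈ B, D b - P.bracket (G - zs * f₀) b ∈ B := by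
  intro Bz hbr1 hzz hzszs hzB hzsB hdec huniq hanti hcrit D hD hDP hDg
  classical
  obtain ⟨m, hm⟩ := hj
  have hj' : Even j := ⟨m, hm⟩
  -- sign evaluations
  have s1 : ((-1:k) ^ ((-j - 1 - 1) * (j - 1))) = 1 :=
    (Even.mul_right ⟨-m-1, by omega⟩ _).neg_one_zpow
  have s2 : ((-1:k) ^ ((j-1)*(j-1))) = -1 :=
    (Odd.mul ⟨m-1, by omega⟩ ⟨m-1, by omega⟩).neg_one_zpow
  have s3 : ((-1:k) ^ ((-j-1)*j)) = 1 := (Even.mul_left hj' _).neg_one_zpow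
  have s6 : ((-1:k) ^ ((j-1)*(-1-1))) = 1 :=
    (Even.mul_left ⟨-1, by ring⟩ _).neg_one_zpow
  have s7 : ((-1:k) ^ ((-j-1-1)*(-1-1))) = 1 :=
    (Even.mul_left ⟨-1, by ring⟩ _).neg_one_zpow
  have s8 : ((-1:k) ^ ((-1-1)*(j-1))) = 1 :=
    (Even.mul_right ⟨-1, by ring⟩ _).neg_one_zpow
  have s10 : ((-1:k) ^ ((-1-1)*(-j-1-1))) = 1 :=
    (Even.mul_right ⟨-1, by ring⟩ _).neg_one_zpow
  have s11 : ∀ i : ℤ, ((-1:k) ^ ((-j-1-1)*(i-1))) = 1 := fun i =>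
    (Even.mul_right ⟨-m-1, by omega⟩ _).neg_one_zpow
  have s12 : ∀ i : ℤ, ((-1:k) ^ ((i-1)*(-j-1-1))) = 1 := fun i =>
    (Even.mul_left ⟨-m-1, by omega⟩ _).neg_one_zpow
  -- F1 : Bz is contained in the commutant of z
  have hBzz : ∀ p ∈ Bz, P.bracket p z = 0 := by
    have hle : Bz ≤ PDOD.commutant P hz := by
      apply Algebra.adjoin_le
      intro x hx
      rcases Set.mem_insert_iff.mp hx with hx | hx
      · subst hx; exact hzz
      · exact PDOD.bracket_flip_zero P hz (hzB x hx)
    exact fun p hp => hle hp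
  -- F2
  have hzs_z : P.bracket zs z = -1 := by
    rw [P.antisymm hzs hz, hbr1, s1, one_smul]
  -- F3
  have hqzs : ∀ q : A, P.bracket q z = 0 → P.bracket (q * zs) z = -q := by
    intro q hq
    have hcomps := PDOD.comp_map_eq_zero P (P.bracket.flip z) (j + 1)
      (PDOD.brR_grade P hz) (by simpa using hq)
    simp only [LinearMap.flip_apply] at hcomps
    conv_lhs => rw [← PDOD.sum_comp P q, Finset.sum_mul]
    rw [PDOD.bracket_sum_left]
    have hterm : ∀ i ∈ (PDOD.dec P q).support,
        P.bracket (PDOD.comp P i q * zs) z = -(PDOD.comp P i q) := by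
      intro i _
      rw [P.leibniz z (PDOD.comp_mem P i q) hzs, hzs_z, mul_neg_one, hcomps i,
        mul_zero, smul_zero, add_zero]
    rw [Finset.sum_congr rfl hterm, Finset.sum_neg_distrib, PDOD.sum_comp]
  -- F4 : the commutant of z is Bz
  have hmemBz : ∀ x : A, P.bracket x z = 0 → x ∈ Bz := by
    intro x hx
    obtain ⟨p, hp, q, hq, rfl⟩ := hdec x
    have h1 : P.bracket (p + q * zs) z = P.bracket p z + P.bracket (q * zs) z := by
      rw [map_add]; rfl
    rw [h1, hBzz p hp, hqzs q (hBzz q hq), zero_add] at hx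
    have hq0 : q = 0 := neg_eq_zero.mp hx
    rw [hq0, zero_mul, add_zero]
    exact hp
  -- derivation facts
  have hD1 : D (1 : A) = 0 := by
    have h := hD 1 1
    simp only [mul_one, one_mul] at h
    exact (left_eq_add.mp h)
  -- F7
  have hDz_z : P.bracket (D z) z = 0 := by
    have h := hDP z z
    rw [hzz, map_zero] at h
    have ha := P.antisymm (hDg j z hz) hz
    rw [s2, neg_smul, one_smul, neg_neg] at ha
    rw [← ha] at h
    have h2 : (2:k) • P.bracket (D z) z = 0 := by rw [two_smul]; exact h.symm
    have h3 : P.bracket (D z) z = (2:k)⁻¹ • ((2:k) • P.bracket (D z) z) := by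
      rw [smul_smul, inv_mul_cancel₀ (two_ne_zero), one_smul]
    rw [h3, h2, smul_zero]
  -- F8 : f₀
  obtain ⟨f₀, hf₀Bz, q, hqBz, hDzeq⟩ := hdec (D z)
  have hq0 : q = 0 := by
    have h1 : P.bracket (D z) z = -q := by
      rw [hDzeq]
      have h2 : P.bracket (f₀ + q * zs) z = P.bracket f₀ z + P.bracket (q * zs) z := by
        rw [map_add]; rfl
      rw [h2, hBzz f₀ hf₀Bz, hqzs q (hBzz q hqBz), zero_add]
    exact neg_eq_zero.mp (h1.symm.trans hDz_z)
  have hDz : D z = f₀ := by rw [hDzeq, hq0, zero_mul, add_zero]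
  have hf₀g : f₀ ∈ P.grade j := hDz ▸ hDg j z hz
  -- F9, F10 : w
  set w : A := P.bracket f₀ zs with hw
  have hwg : w ∈ P.grade 0 := by
    have h := P.bracket_mem hf₀g hzs
    rwa [show j + (-j-1) + 1 = 0 by ring] at h
  have hzf₀ : P.bracket z f₀ = 0 := PDOD.bracket_flip_zero' P hz (hBzz f₀ hf₀Bz)
  have hm1f₀ : P.bracket (-1 : A) f₀ = 0 := by
    rw [map_neg, LinearMap.neg_apply, PDOD.bracket_one, neg_zero]
  have hwz : P.bracket w z = 0 := by
    have hJ := P.jacobi hf₀g hzs hz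
    rw [hzs_z, hzf₀, hm1f₀, map_zero, LinearMap.zero_apply, smul_zero, smul_zero,
      add_zero, add_zero, s2, neg_smul, one_smul, neg_eq_zero] at hJ
    exact hJ
  have hwBz : w ∈ Bz := hmemBz w hwz
  -- F11
  have hDzs_g : D zs ∈ P.grade (-j - 1) := hDg _ zs hzs
  have hzDzs : P.bracket z (D zs) = -w := by
    have h := hDP z zs
    rw [hbr1, hD1, hDz, ← hw] at h
    exact eq_neg_of_add_eq_zero_right h.symm
  have hDzs_z : P.bracket (D zs) z = w := by
    have ha := P.antisymm hDzs_g hz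
    rw [s1, one_smul, hzDzs, neg_neg] at ha
    exact ha
  -- F12 : g₀
  set g₀ : A := D zs + zs * w with hg₀
  have hg₀g : g₀ ∈ P.grade (-j - 1) := by
    refine Submodule.add_mem _ hDzs_g ?_
    have h := P.mul_mem hzs hwg
    rwa [show (-j-1) + 0 = -j-1 by ring] at h
  have hzsw_z : P.bracket (zs * w) z = -w := by
    rw [P.leibniz z hzs hwg, hwz, hzs_z]
    simp [mul_neg_one]
  have hg₀z : P.bracket g₀ z = 0 := by
    have h1 : P.bracket g₀ z = P.bracket (D zs) z + P.bracket (zs * w) z := by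
      rw [hg₀, map_add]; rfl
    rw [h1, hDzs_z, hzsw_z]
    simp
  have hg₀Bz : g₀ ∈ Bz := hmemBz _ hg₀z
  -- F13 : homogeneous antiderivative G
  obtain ⟨G₀, hG₀Bz, hG₀⟩ := hanti g₀ hg₀Bz
  set s : Finset ℤ := insert (-1) (PDOD.dec P G₀).support with hsdef
  set u : ℤ → A := fun i =>
    P.bracket (PDOD.comp P i G₀) zs - (if i = -1 then g₀ else 0) with hu
  have humem : ∀ i ∈ s, u i ∈ P.grade (i + (-j)) := by
    intro i _
    refine Submodule.sub_mem _ ?_ ?_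
    · have h := P.bracket_mem (PDOD.comp_mem P i G₀) hzs
      rwa [show i + (-j-1) + 1 = i + (-j) by ring] at h
    · by_cases hi : i = -1
      · subst hi
        simp only [if_pos rfl]
        rwa [show (-1:ℤ) + (-j) = -j-1 by ring]
      · simp [hi]
  have husum : ∑ i ∈ s, u i = 0 := by
    rw [hu, Finset.sum_sub_distrib]
    have h1 : ∑ i ∈ s, P.bracket (PDOD.comp P i G₀) zs = g₀ := by
      rw [hsdef, Finset.sum_insert_of_eq_zero_if_notMem
        (fun hnot => by rw [PDOD.comp_eq_zero_of_not_mem P hnot, map_zero]; rfl),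
        ← PDOD.bracket_sum_left, PDOD.sum_comp, hG₀]
    have h2 : ∑ i ∈ s, (if i = -1 then g₀ else 0) = g₀ := by
      rw [Finset.sum_ite_eq' s (-1) (fun _ => g₀), if_pos (by simp [hsdef])]
    rw [h1, h2, sub_self]
  have hukey := PDOD.sum_homog_eq_zero P (σ := fun i => i + (-j))
      (fun a _ b _ hab => by simpa using hab) humem husum (-1) (by simp [hsdef])
  set G : A := PDOD.comp P (-1) G₀ with hGdef
  have hGzs : P.bracket G zs = g₀ := by
    have h := hukey
    rw [hu] at h
    simp only [if_pos rfl] at h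
    exact sub_eq_zero.mp h
  have hGBz : G ∈ Bz := by
    refine hmemBz _ ?_
    have h := PDOD.comp_map_eq_zero P (P.bracket.flip z) (j+1) (PDOD.brR_grade P hz)
      (by simpa using hBzz G₀ hG₀Bz) (-1)
    simpa using h
  have hGg : G ∈ P.grade (-1) := PDOD.comp_mem P (-1) G₀
  -- F14, F15, F16 : the hamiltonian h
  set h : A := G - zs * f₀ with hhdef
  have hzsf₀g : zs * f₀ ∈ P.grade (-1) := by
    have hh := P.mul_mem hzs hf₀g
    rwa [show (-j-1) + j = -1 by ring] at hh
  have hhg : h ∈ P.grade (-1) := Submodule.sub_mem _ hGg hzsf₀g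
  have hbr_h : ∀ y : A, P.bracket h y = P.bracket G y - P.bracket (zs * f₀) y := by
    intro y
    rw [hhdef, map_sub]; rfl
  have hzsf₀_z : P.bracket (zs * f₀) z = -f₀ := by
    rw [P.leibniz z hzs hf₀g, hBzz f₀ hf₀Bz, mul_zero, zero_add, hzs_z, mul_neg_one,
      s3, one_smul]
  have hhz : P.bracket h z = D z := by
    rw [hbr_h, hBzz G hGBz, hzsf₀_z, zero_sub, neg_neg, hDz]
  have hzsf₀_zs : P.bracket (zs * f₀) zs = zs * w := by
    rw [P.leibniz zs hzs hf₀g, hzszs, mul_zero, smul_zero, add_zero, ← hw]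
  have hhzs : P.bracket h zs = D zs := by
    rw [hbr_h, hGzs, hzsf₀_zs, hg₀, add_sub_cancel_right]
  -- conclusion
  refine ⟨f₀, g₀, -w, G, hf₀Bz, hg₀Bz, neg_mem hwBz, hGBz, hDz, ?_, hGzs, ?_, ?_, ?_⟩
  · rw [hg₀, mul_neg, add_neg_cancel_right]
  · rw [← hhdef]; exact hhz.symm
  · rw [← hhdef]; exact hhzs.symm
  · intro b hb
    have hbz : P.bracket b z = 0 := PDOD.bracket_flip_zero P hz (hzB b hb)
    have hbzs : P.bracket b zs = 0 := PDOD.bracket_flip_zero P hzs (hzsB b hb)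
    have hbiz : ∀ i, P.bracket (PDOD.comp P i b) z = 0 := fun i => by
      simpa using PDOD.comp_map_eq_zero P (P.bracket.flip z) (j+1)
        (PDOD.brR_grade P hz) (by simpa using hbz) i
    have hbizs : ∀ i, P.bracket (PDOD.comp P i b) zs = 0 := fun i => by
      simpa using PDOD.comp_map_eq_zero P (P.bracket.flip zs) ((-j-1)+1)
        (PDOD.brR_grade P hzs) (by simpa using hbzs) i
    have key : ∀ i : ℤ, D (PDOD.comp P i b) - P.bracket h (PDOD.comp P i b) ∈ B := by
      intro i
      set bi := PDOD.comp P i b with hbidef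
      have hbig : bi ∈ P.grade i := PDOD.comp_mem P i b
      have hDbiz : P.bracket (D bi) z = -(P.bracket bi f₀) := by
        have hh := hDP bi z
        rw [show P.bracket bi z = 0 from hbiz i, map_zero, hDz] at hh
        exact eq_neg_of_add_eq_zero_left hh.symm
      have e1 : P.bracket (D bi) z = ((-1:k) ^ ((j-1)*(i-1))) • P.bracket f₀ bi := by
        rw [hDbiz, P.antisymm hbig hf₀g, neg_neg, mul_comm (i-1 : ℤ) (j-1)]
      have hzh : P.bracket z h = -f₀ := by
        rw [P.antisymm hz hhg, s6, one_smul, hhz, hDz]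
      have e2 : P.bracket (P.bracket h bi) z = ((-1:k) ^ ((j-1)*(i-1))) • P.bracket f₀ bi := by
        have hJ := P.jacobi hhg hbig hz
        rw [show P.bracket bi z = 0 from hbiz i, hzh, map_zero, LinearMap.zero_apply,
          smul_zero, add_zero, map_neg, LinearMap.neg_apply, smul_neg,
          s8, one_smul] at hJ
        exact add_neg_eq_zero.mp hJ
      have hDbizs : P.bracket (D bi) zs = P.bracket (D zs) bi := by
        have hh := hDP bi zs
        rw [show P.bracket bi zs = 0 from hbizs i, map_zero] at hh
        have h1 : P.bracket bi (D zs) = -(P.bracket (D zs) bi) := by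
          rw [P.antisymm hbig hDzs_g, s12 i, one_smul]
        rw [h1] at hh
        exact add_neg_eq_zero.mp hh.symm
      have hzsh : P.bracket zs h = -(D zs) := by
        rw [P.antisymm hzs hhg, s7, one_smul, hhzs]
      have e2' : P.bracket (P.bracket h bi) zs = P.bracket (D zs) bi := by
        have hJ := P.jacobi hhg hbig hzs
        rw [show P.bracket bi zs = 0 from hbizs i, hzsh, map_zero, LinearMap.zero_apply,
          smul_zero, add_zero, map_neg, LinearMap.neg_apply, smul_neg,
          s10, one_smul, s11 i, one_smul] at hJ
        exact add_neg_eq_zero.mp hJ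
      refine hcrit _ ?_ ?_
      · have hsub : P.bracket (D bi - P.bracket h bi) z
            = P.bracket (D bi) z - P.bracket (P.bracket h bi) z := by
          rw [map_sub]; rfl
        rw [hsub, e1, e2, sub_self]
      · have hsub : P.bracket (D bi - P.bracket h bi) zs
            = P.bracket (D bi) zs - P.bracket (P.bracket h bi) zs := by
          rw [map_sub]; rfl
        rw [hsub, hDbizs, e2', sub_self]
    have hsum : D b - P.bracket h b =
        ∑ i ∈ (PDOD.dec P b).support,
          (D (PDOD.comp P i b) - P.bracket h (PDOD.comp P i b)) := by
      rw [Finset.sum_sub_distrib, ← map_sum, ← map_sum, PDOD.sum_comp]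
    rw [← hhdef, hsum]
    exact Subalgebra.sum_mem B (fun i _ => key i)
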